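/- For a > 0, the function f(t) = √(2t - at²) is positive on (0, 2/a) and satisfies -f'' = f · w where w(t) = (2t - at²)^{-2}; i.e., f solves the Ermakov–Pinney equation -y'' = 1/y³ on (0, 2/a). -/

import Mathlib

open Real Set

theorem ermakov_pinney_sqrt_parabola (a : ℝ) (ha : 0 < a) :
    ∀ t ∈ Ioo (0 : ℝ) (2 / a),
      0 < Real.sqrt (2 * t - a * t ^ 2) ∧
      deriv (deriv (fun t : ℝ => Real.sqrt (2 * t - a * t ^ 2))) t =
        -(Real.sqrt (2 * t - a * t ^ 2) * ((2 * t - a * t ^ 2) ^ 2)⁻¹) := by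
  have hgpos : ∀ s ∈ Ioo (0:ℝ) (2/a), 0 < 2 * s - a * s ^ 2 := by
    intro s hs
    have h1 : 0 < s := hs.1
    have h2 : a * s < 2 := by
      have h3 := hs.2
      have : a * s < a * (2 / a) := by exact mul_lt_mul_of_pos_left h3 ha
      rwa [mul_div_cancel₀ 2 (ne_of_gt ha)] at this
    nlinarith
  have hderiv1 : ∀ s ∈ Ioo (0:ℝ) (2/a),
      HasDerivAt (fun t : ℝ => Real.sqrt (2 * t - a * t ^ 2))
        ((2 - 2*a*s) / (2 * Real.sqrt (2 * s - a * s ^ 2))) s := by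
    intro s hs
    have hg : HasDerivAt (fun t : ℝ => 2 * t - a * t ^ 2) (2 - 2*a*s) s := by
      have h1 : HasDerivAt (fun t : ℝ => 2 * t) 2 s := by
        simpa using (hasDerivAt_id s).const_mul 2
      have h2 : HasDerivAt (fun t : ℝ => a * t ^ 2) (a * (2 * s)) s := by
        simpa using ((hasDerivAt_pow 2 s).const_mul a)
      have := h1.sub h2
      exact this.congr_deriv (by ring)
    exact hg.sqrt (ne_of_gt (hgpos s hs))
  intro t ht
  have hgt := hgpos t ht
  have hsq : 0 < Real.sqrt (2 * t - a * t ^ 2) := Real.sqrt_pos.mpr hgt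
  refine ⟨hsq, ?_⟩
  have heq : deriv (fun t : ℝ => Real.sqrt (2 * t - a * t ^ 2)) =ᶠ[nhds t]
      fun s => (2 - 2*a*s) / (2 * Real.sqrt (2 * s - a * s ^ 2)) :=
    (isOpen_Ioo.eventually_mem ht).mono fun s hs => (hderiv1 s hs).deriv
  rw [heq.deriv_eq]
  -- second derivative
  have hnum : HasDerivAt (fun s : ℝ => 2 - 2*a*s) (-(2*a)) t := by
    have h1 : HasDerivAt (fun s : ℝ => 2*a*s) (2*a) t := by
      simpa using (hasDerivAt_id t).const_mul (2*a)
    exact ((hasDerivAt_const t (2:ℝ)).sub h1).congr_deriv (by ring)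
  have hden : HasDerivAt (fun s : ℝ => 2 * Real.sqrt (2 * s - a * s ^ 2))
      (2 * ((2 - 2*a*t) / (2 * Real.sqrt (2 * t - a * t ^ 2)))) t :=
    (hderiv1 t ht).const_mul 2
  have hdne : 2 * Real.sqrt (2 * t - a * t ^ 2) ≠ 0 := by positivity
  have hdiv := hnum.div hden hdne
  have hd2 : deriv (fun s : ℝ => (2 - 2*a*s) / (2 * Real.sqrt (2 * s - a * s ^ 2))) t = _ := hdiv.deriv
  rw [hd2]
  have hsqsq : Real.sqrt (2 * t - a * t ^ 2) ^ 2 = 2 * t - a * t ^ 2 :=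
    Real.sq_sqrt (le_of_lt hgt)
  have hsne : Real.sqrt (2 * t - a * t ^ 2) ≠ 0 := ne_of_gt hsq
  set u := Real.sqrt (2 * t - a * t ^ 2) with hu
  field_simp
  have key : u ^ 4 = t ^ 2 * (2 - a * t) ^ 2 := by
    rw [show u ^ 4 = (u ^ 2) ^ 2 by ring, hsqsq]; ring
  have hne : t ^ 2 * (2 - a * t) ^ 2 ≠ 0 := by
    rw [← key]; positivity
  rw [key, div_self hne]
  linear_combination (-a) * hsqsq
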